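/- Let A be a unital C*-algebra with a faithful tracial state τ, and let e₁, e₂ ∈ A be projections such that τ(e₁) = τ(e₂) and e₁e₂e₁ = (1/λ)e₁ for some real number λ > 0. Then e₂e₁e₂ = (1/λ)e₂. -/
import Mathlib


open scoped ComplexOrder

/-- **Lemma 1.3.** Let `A` be a unital C*-algebra with a faithful tracial state `τ`, and let
`e₁, e₂ ∈ A` be projections such that `τ(e₁) = τ(e₂)` and `e₁e₂e₁ = (1/λ)e₁` for some real
`λ > 0`. Then `e₂e₁e₂ = (1/λ)e₂`. -/
theorem subproduct_systems_stmt0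
    (A : Type*) [NormedRing A] [StarRing A] [CStarRing A]
    [NormedAlgebra ℂ A] [CompleteSpace A] [StarModule ℂ A]
    -- `τ` is a state:
    (τ : A →ₗ[ℂ] ℂ) (hτ_one : τ 1 = 1) (hτ_pos : ∀ a : A, 0 ≤ τ (star a * a))
    -- `τ` is tracial:
    (hτ_tr : ∀ a b : A, τ (a * b) = τ (b * a))
    -- `τ` is faithful:
    (hτ_faithful : ∀ a : A, τ (star a * a) = 0 → a = 0)
    -- `e₁`, `e₂` are projections:
    (e₁ e₂ : A) (he₁_sa : IsSelfAdjoint e₁) (he₁_idem : e₁ * e₁ = e₁)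
    (he₂_sa : IsSelfAdjoint e₂) (he₂_idem : e₂ * e₂ = e₂)
    (lam : ℝ) (hlam : 0 < lam)
    (htrace_eq : τ e₁ = τ e₂)
    (h : e₁ * e₂ * e₁ = ((lam : ℂ))⁻¹ • e₁) :
    e₂ * e₁ * e₂ = ((lam : ℂ))⁻¹ • e₂ := by
  set c : ℂ := ((lam : ℂ))⁻¹ with hc
  have hcstar : star c = c := by
    simp [hc, ← Complex.ofReal_inv]
  set x : A := e₂ * e₁ * e₂ - c • e₂ with hx
  have hx_sa : star x = x := by
    simp [hx, star_sub, star_smul, hcstar, mul_assoc,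
      he₁_sa.star_eq, he₂_sa.star_eq]
  -- key trace identity
  have key : τ (e₂ * e₁ * e₂) = c * τ e₂ := by
    have h1 : τ (e₂ * e₁ * e₂) = τ (e₂ * e₁) := by
      rw [hτ_tr (e₂ * e₁) e₂, ← mul_assoc, he₂_idem]
    have h2 : τ (e₂ * e₁) = τ (e₁ * e₂ * e₁) :=
      calc τ (e₂ * e₁) = τ (e₂ * e₁ * e₁) := by rw [mul_assoc, he₁_idem]
        _ = τ (e₁ * (e₂ * e₁)) := hτ_tr _ _
        _ = τ (e₁ * e₂ * e₁) := by rw [mul_assoc]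
    rw [h1, h2, h, map_smul, smul_eq_mul, htrace_eq]
  -- square computation
  have hsq : x * x = (c * c) • e₂ - c • (e₂ * e₁ * e₂) := by
    have hbig : (e₂ * e₁ * e₂) * (e₂ * e₁ * e₂) = c • (e₂ * e₁ * e₂) := by
      have e1 : (e₂ * e₁ * e₂) * (e₂ * e₁ * e₂) = e₂ * e₁ * (e₂ * e₂) * e₁ * e₂ := by
        noncomm_ring
      have e2 : e₂ * e₁ * e₂ * e₁ * e₂ = e₂ * (e₁ * e₂ * e₁) * e₂ := by noncomm_ring
      rw [e1, he₂_idem, e2, h, mul_smul_comm, smul_mul_assoc]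
    have h2 : (e₂ * e₁ * e₂) * e₂ = e₂ * e₁ * e₂ := by rw [mul_assoc, he₂_idem]
    have h3 : e₂ * (e₂ * e₁ * e₂) = e₂ * e₁ * e₂ := by
      rw [← mul_assoc, ← mul_assoc, he₂_idem]
    rw [hx, sub_mul, mul_sub, mul_sub, hbig]
    simp only [mul_smul_comm, smul_mul_assoc, smul_smul, h2, h3, he₂_idem]
    abel
  have hzero : τ (star x * x) = 0 := by
    rw [hx_sa, hsq, map_sub, map_smul, map_smul, key, smul_eq_mul, smul_eq_mul]
    ring
  have hfin := hτ_faithful x hzero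
  rw [hx, sub_eq_zero] at hfin
  exact hfin
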